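/- For a nonzero integer n, define U_n : ℝ \ {0} → ℝ as follows: if n > 0, U_n(q) = q^(4n) + V(q)·P_n(q), and if n < 0, U_n(q) = U_{−n}(q⁻¹), where V(q) = −q⁹ + q⁷ − q⁵ + q³ + q + q⁻¹ + q⁻³ − q⁻⁵ + q⁻⁷ − q⁻⁹ and P_m(q) = ∑_{k=1}^{m} (q^(4k−3) − q^(4k−1)) for m ≥ 1. Then for every nonzero integer n, the third (real) derivative of U_n at q = 1 equals 576n, and in particular U_n‴(1) ≠ 0. -/

import Mathlib

/-- The Jones polynomial of the pretzel link `P(3,−2,2,−3)`. -/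
noncomputable def pretzelV : ℝ → ℝ := fun q =>
  -q ^ 9 + q ^ 7 - q ^ 5 + q ^ 3 + q + q⁻¹ + (q⁻¹) ^ 3 - (q⁻¹) ^ 5 + (q⁻¹) ^ 7 - (q⁻¹) ^ 9

/-- `Pₘ(q) = ∑_{k=1}^{m} (q^(4k−3) − q^(4k−1))`. -/
noncomputable def Pfun (m : ℕ) : ℝ → ℝ := fun q =>
  ∑ k ∈ Finset.Icc 1 m, (q ^ (4 * k - 3) - q ^ (4 * k - 1))

/-- The Jones polynomial of `KT_{2,n}` for a nonzero integer `n`: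
for `n > 0` it is `q^(4n) + V(q)·Pₙ(q)`, and for `n < 0` it is `U_{−n}(q⁻¹)`
(the value for `n = 0` is irrelevant and set to `1`). -/
noncomputable def Ufun (n : ℤ) : ℝ → ℝ := fun q =>
  if 0 < n then q ^ (4 * n) + pretzelV q * Pfun n.toNat q
  else if n < 0 then
    q⁻¹ ^ (4 * (-n)) + pretzelV q⁻¹ * Pfun (-n).toNat q⁻¹
  else 1

open Finset Filter

/-- A finite linear combination of integer powers. -/
noncomputable def Lc (s : Finset ℕ) (c e : ℕ → ℤ) : ℝ → ℝ := fun q => ∑ i ∈ s, (c i : ℝ) * q ^ (e i)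

def dc (c e : ℕ → ℤ) : ℕ → ℤ := fun i => c i * e i
def de (e : ℕ → ℤ) : ℕ → ℤ := fun i => e i - 1

noncomputable def L1 (s : Finset ℕ) (c e : ℕ → ℤ) : ℝ → ℝ := Lc s (dc c e) (de e)
noncomputable def L2 (s : Finset ℕ) (c e : ℕ → ℤ) : ℝ → ℝ := L1 s (dc c e) (de e)
noncomputable def L3 (s : Finset ℕ) (c e : ℕ → ℤ) : ℝ → ℝ := L2 s (dc c e) (de e)

lemma Lc_hasDerivAt (s : Finset ℕ) (c e : ℕ → ℤ) {q : ℝ} (hq : q ≠ 0) :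
    HasDerivAt (Lc s c e) (L1 s c e q) q := by
  unfold L1 Lc
  refine HasDerivAt.fun_sum (A := fun i y => (c i : ℝ) * y ^ (e i)) fun i _ => ?_
  have h := (hasDerivAt_zpow (e i) q (Or.inl hq)).const_mul ((c i : ℝ))
  refine h.congr_deriv ?_
  simp only [dc, de]
  push_cast
  ring

lemma L1_hasDerivAt (s : Finset ℕ) (c e : ℕ → ℤ) {q : ℝ} (hq : q ≠ 0) :
    HasDerivAt (L1 s c e) (L2 s c e q) q := Lc_hasDerivAt s _ _ hq

lemma L2_hasDerivAt (s : Finset ℕ) (c e : ℕ → ℤ) {q : ℝ} (hq : q ≠ 0) :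
    HasDerivAt (L2 s c e) (L3 s c e q) q := Lc_hasDerivAt s _ _ hq

lemma Lc_one (s : Finset ℕ) (c e : ℕ → ℤ) : Lc s c e 1 = ((∑ i ∈ s, c i : ℤ) : ℝ) := by
  simp [Lc]

lemma L1_one (s : Finset ℕ) (c e : ℕ → ℤ) : L1 s c e 1 = ((∑ i ∈ s, c i * e i : ℤ) : ℝ) := by
  rw [L1, Lc_one]; norm_num [dc]

lemma L2_one (s : Finset ℕ) (c e : ℕ → ℤ) :
    L2 s c e 1 = ((∑ i ∈ s, c i * e i * (e i - 1) : ℤ) : ℝ) := by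
  rw [L2, L1, Lc_one]; norm_num [dc, de]

lemma L3_one (s : Finset ℕ) (c e : ℕ → ℤ) :
    L3 s c e 1 = ((∑ i ∈ s, c i * e i * (e i - 1) * (e i - 2) : ℤ) : ℝ) := by
  rw [L3, L2, L1, Lc_one]
  congr 1
  exact Finset.sum_congr rfl fun i _ => by simp only [dc, de]; ring

lemma third_deriv_eq {f g1 g2 g3 : ℝ → ℝ}
    (h1 : ∀ q : ℝ, q ≠ 0 → HasDerivAt f (g1 q) q)
    (h2 : ∀ q : ℝ, q ≠ 0 → HasDerivAt g1 (g2 q) q)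
    (h3 : ∀ q : ℝ, q ≠ 0 → HasDerivAt g2 (g3 q) q) :
    iteratedDeriv 3 f 1 = g3 1 := by
  have hne : ∀ᶠ q in nhds (1:ℝ), q ≠ 0 := eventually_ne_nhds one_ne_zero
  have e1 : deriv f =ᶠ[nhds (1:ℝ)] g1 := hne.mono fun q hq => (h1 q hq).deriv
  have e2 : deriv (deriv f) =ᶠ[nhds (1:ℝ)] g2 :=
    e1.deriv.trans (hne.mono fun q hq => (h2 q hq).deriv)
  have e3 : deriv (deriv (deriv f)) =ᶠ[nhds (1:ℝ)] g3 :=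
    e2.deriv.trans (hne.mono fun q hq => (h3 q hq).deriv)
  have h30 : iteratedDeriv 3 f = deriv (deriv (deriv f)) := by
    rw [show (3:ℕ) = 2+1 from rfl, iteratedDeriv_succ, show (2:ℕ) = 1+1 from rfl,
      iteratedDeriv_succ, show (1:ℕ) = 0+1 from rfl, iteratedDeriv_succ, iteratedDeriv_zero]
  rw [h30]
  exact e3.self_of_nhds

lemma master (s1 s2 s3 : Finset ℕ) (c1 e1 c2 e2 c3 e3 : ℕ → ℤ) :
    iteratedDeriv 3 (fun q => Lc s1 c1 e1 q + Lc s2 c2 e2 q * Lc s3 c3 e3 q) 1 =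
      ((∑ i ∈ s1, c1 i * e1 i * (e1 i - 1) * (e1 i - 2) : ℤ) : ℝ)
      + ((∑ i ∈ s2, c2 i * e2 i * (e2 i - 1) * (e2 i - 2) : ℤ) : ℝ) * ((∑ i ∈ s3, c3 i : ℤ) : ℝ)
      + 3 * ((∑ i ∈ s2, c2 i * e2 i * (e2 i - 1) : ℤ) : ℝ) * ((∑ i ∈ s3, c3 i * e3 i : ℤ) : ℝ)
      + 3 * ((∑ i ∈ s2, c2 i * e2 i : ℤ) : ℝ) * ((∑ i ∈ s3, c3 i * e3 i * (e3 i - 1) : ℤ) : ℝ)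
      + ((∑ i ∈ s2, c2 i : ℤ) : ℝ) * ((∑ i ∈ s3, c3 i * e3 i * (e3 i - 1) * (e3 i - 2) : ℤ) : ℝ) := by
  have key := third_deriv_eq
    (f := fun q => Lc s1 c1 e1 q + Lc s2 c2 e2 q * Lc s3 c3 e3 q)
    (g1 := fun q => L1 s1 c1 e1 q +
      (L1 s2 c2 e2 q * Lc s3 c3 e3 q + Lc s2 c2 e2 q * L1 s3 c3 e3 q))
    (g2 := fun q => L2 s1 c1 e1 q +
      ((L2 s2 c2 e2 q * Lc s3 c3 e3 q + L1 s2 c2 e2 q * L1 s3 c3 e3 q)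
        + (L1 s2 c2 e2 q * L1 s3 c3 e3 q + Lc s2 c2 e2 q * L2 s3 c3 e3 q)))
    (g3 := fun q => L3 s1 c1 e1 q +
      (((L3 s2 c2 e2 q * Lc s3 c3 e3 q + L2 s2 c2 e2 q * L1 s3 c3 e3 q)
        + (L2 s2 c2 e2 q * L1 s3 c3 e3 q + L1 s2 c2 e2 q * L2 s3 c3 e3 q))
        + ((L2 s2 c2 e2 q * L1 s3 c3 e3 q + L1 s2 c2 e2 q * L2 s3 c3 e3 q)
          + (L1 s2 c2 e2 q * L2 s3 c3 e3 q + Lc s2 c2 e2 q * L3 s3 c3 e3 q))))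
    (fun q hq => (Lc_hasDerivAt s1 c1 e1 hq).add
      ((Lc_hasDerivAt s2 c2 e2 hq).mul (Lc_hasDerivAt s3 c3 e3 hq)))
    (fun q hq => (L1_hasDerivAt s1 c1 e1 hq).add
      (((L1_hasDerivAt s2 c2 e2 hq).mul (Lc_hasDerivAt s3 c3 e3 hq)).add
        ((Lc_hasDerivAt s2 c2 e2 hq).mul (L1_hasDerivAt s3 c3 e3 hq))))
    (fun q hq => (L2_hasDerivAt s1 c1 e1 hq).add
      ((((L2_hasDerivAt s2 c2 e2 hq).mul (Lc_hasDerivAt s3 c3 e3 hq)).add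
        ((L1_hasDerivAt s2 c2 e2 hq).mul (L1_hasDerivAt s3 c3 e3 hq))).add
        (((L1_hasDerivAt s2 c2 e2 hq).mul (L1_hasDerivAt s3 c3 e3 hq)).add
          ((Lc_hasDerivAt s2 c2 e2 hq).mul (L2_hasDerivAt s3 c3 e3 hq)))))
  rw [key]
  beta_reduce
  rw [L3_one, L3_one, L3_one, L2_one, L2_one, L1_one, L1_one, Lc_one, Lc_one]
  push_cast
  ring

def cV : ℕ → ℤ := fun i =>
  if i = 0 then -1 else if i = 2 then -1 else if i = 7 then -1 else if i = 9 then -1 else 1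
def eV : ℕ → ℤ := fun i => 9 - 2 * i
def eVn : ℕ → ℤ := fun i => -(eV i)
def cP : ℕ → ℤ := fun j => (-1) ^ j
def eP : ℕ → ℤ := fun j => 2 * j + 1
def ePn : ℕ → ℤ := fun j => -(eP j)
def cOne : ℕ → ℤ := fun _ => 1
def eU (a : ℤ) : ℕ → ℤ := fun _ => 4 * a

lemma Lc_inv (s : Finset ℕ) (c e : ℕ → ℤ) (q : ℝ) :
    Lc s c e q⁻¹ = Lc s c (fun i => -(e i)) q := by
  simp [Lc, inv_zpow', zpow_neg]

lemma pretzelV_eq (q : ℝ) : pretzelV q = Lc (range 10) cV eV q := by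
  simp only [Lc, Finset.sum_range_succ, Finset.sum_range_zero, cV, eV]
  norm_num [pretzelV, zpow_neg]
  norm_cast

lemma Pfun_eq (m : ℕ) (q : ℝ) : Pfun m q = Lc (range (2 * m)) cP eP q := by
  induction m with
  | zero => simp [Pfun, Lc]
  | succ k ih =>
    unfold Pfun Lc at *
    rw [Finset.sum_Icc_succ_top (by omega : 1 ≤ k + 1), ih,
      show 2 * (k + 1) = 2 * k + 1 + 1 from by ring, Finset.sum_range_succ, Finset.sum_range_succ]
    have h1 : cP (2 * k) = 1 := by simp [cP, pow_mul]
    have h2 : cP (2 * k + 1) = -1 := by simp [cP, pow_succ, pow_mul]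
    have h3 : eP (2 * k) = ((4 * k + 1 : ℕ) : ℤ) := by simp [eP]; ring
    have h4 : eP (2 * k + 1) = ((4 * k + 3 : ℕ) : ℤ) := by simp [eP]; ring
    rw [h1, h2, h3, h4, zpow_natCast, zpow_natCast,
      show 4 * (k + 1) - 3 = 4 * k + 1 from by omega,
      show 4 * (k + 1) - 1 = 4 * k + 3 from by omega]
    push_cast
    ring

lemma p0 (m : ℕ) : (∑ j ∈ range (2 * m), cP j) = 0 := by
  induction m with
  | zero => simp
  | succ k ih =>
    rw [show 2 * (k + 1) = 2 * k + 1 + 1 from by ring, Finset.sum_range_succ,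
      Finset.sum_range_succ, ih]
    simp [cP, pow_succ, pow_mul]

lemma p1 (m : ℕ) : (∑ j ∈ range (2 * m), cP j * eP j) = -2 * m := by
  induction m with
  | zero => simp
  | succ k ih =>
    rw [show 2 * (k + 1) = 2 * k + 1 + 1 from by ring, Finset.sum_range_succ,
      Finset.sum_range_succ, ih]
    simp only [cP, eP, pow_succ, pow_mul]
    push_cast
    ring

lemma p2 (m : ℕ) : (∑ j ∈ range (2 * m), cP j * eP j * (eP j - 1)) = -8 * m ^ 2 + 2 * m := by
  induction m with
  | zero => simp
  | succ k ih =>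
    rw [show 2 * (k + 1) = 2 * k + 1 + 1 from by ring, Finset.sum_range_succ,
      Finset.sum_range_succ, ih]
    simp only [cP, eP, pow_succ, pow_mul]
    push_cast
    ring

lemma p3 (m : ℕ) :
    (∑ j ∈ range (2 * m), cP j * eP j * (eP j - 1) * (eP j - 2)) = -32 * m ^ 3 + 24 * m ^ 2 + 2 * m := by
  induction m with
  | zero => simp
  | succ k ih =>
    rw [show 2 * (k + 1) = 2 * k + 1 + 1 from by ring, Finset.sum_range_succ,
      Finset.sum_range_succ, ih]
    simp only [cP, eP, pow_succ, pow_mul]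
    push_cast
    ring

lemma q1 (m : ℕ) : (∑ j ∈ range (2 * m), cP j * ePn j) = 2 * m := by
  induction m with
  | zero => simp
  | succ k ih =>
    rw [show 2 * (k + 1) = 2 * k + 1 + 1 from by ring, Finset.sum_range_succ,
      Finset.sum_range_succ, ih]
    simp only [cP, eP, ePn, pow_succ, pow_mul]
    push_cast
    ring

lemma q2 (m : ℕ) : (∑ j ∈ range (2 * m), cP j * ePn j * (ePn j - 1)) = -8 * m ^ 2 - 2 * m := by
  induction m with
  | zero => simp
  | succ k ih =>
    rw [show 2 * (k + 1) = 2 * k + 1 + 1 from by ring, Finset.sum_range_succ,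
      Finset.sum_range_succ, ih]
    simp only [cP, eP, ePn, pow_succ, pow_mul]
    push_cast
    ring

lemma q3 (m : ℕ) :
    (∑ j ∈ range (2 * m), cP j * ePn j * (ePn j - 1) * (ePn j - 2)) = 32 * m ^ 3 + 24 * m ^ 2 - 2 * m := by
  induction m with
  | zero => simp
  | succ k ih =>
    rw [show 2 * (k + 1) = 2 * k + 1 + 1 from by ring, Finset.sum_range_succ,
      Finset.sum_range_succ, ih]
    simp only [cP, eP, ePn, pow_succ, pow_mul]
    push_cast
    ring

lemma v0 : (∑ i ∈ range 10, cV i) = 2 := by decide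
lemma v1 : (∑ i ∈ range 10, cV i * eV i) = 0 := by decide
lemma v2 : (∑ i ∈ range 10, cV i * eV i * (eV i - 1)) = -94 := by decide
lemma v3 : (∑ i ∈ range 10, cV i * eV i * (eV i - 1) * (eV i - 2)) = 282 := by decide
lemma w1 : (∑ i ∈ range 10, cV i * eVn i) = 0 := by decide
lemma w2 : (∑ i ∈ range 10, cV i * eVn i * (eVn i - 1)) = -94 := by decide
lemma w3 : (∑ i ∈ range 10, cV i * eVn i * (eVn i - 1) * (eVn i - 2)) = 282 := by decide

lemma u3 (a : ℤ) :
    (∑ i ∈ range 1, cOne i * eU a i * (eU a i - 1) * (eU a i - 2)) = 4*a*(4*a-1)*(4*a-2) := by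
  simp [cOne, eU]

/-- For every nonzero integer `n`, `Uₙ‴(1) = 576n ≠ 0`. -/
theorem Ufun_third_deriv_at_one (n : ℤ) (hn : n ≠ 0) :
    iteratedDeriv 3 (Ufun n) 1 = 576 * n ∧ iteratedDeriv 3 (Ufun n) 1 ≠ 0 := by
  have key : iteratedDeriv 3 (Ufun n) 1 = 576 * n := by
    rcases hn.lt_or_gt with hneg | hpos
    · -- negative case
      have hU : Ufun n = fun q => Lc (range 1) cOne (eU n) q +
          Lc (range 10) cV eVn q * Lc (range (2 * (-n).toNat)) cP ePn q := by
        funext q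
        simp only [Ufun, if_neg (by omega : ¬ 0 < n), if_pos hneg]
        rw [pretzelV_eq, Pfun_eq, Lc_inv, Lc_inv]
        congr 1
        rw [inv_zpow', show -(4 * -n) = 4 * n from by ring]
        simp [Lc, cOne, eU]
      rw [hU, master, u3, w3, w2, w1, v0, p0, q1, q2, q3,
        show ((-n).toNat : ℤ) = -n from Int.toNat_of_nonneg (by omega)]
      push_cast
      ring
    · -- positive case
      have hU : Ufun n = fun q => Lc (range 1) cOne (eU n) q +
          Lc (range 10) cV eV q * Lc (range (2 * n.toNat)) cP eP q := by
        funext q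
        simp only [Ufun, if_pos hpos]
        rw [pretzelV_eq, Pfun_eq]
        congr 1
        simp [Lc, cOne, eU]
      rw [hU, master, u3, v3, v2, v1, v0, p0, p1, p2, p3,
        show ((n).toNat : ℤ) = n from Int.toNat_of_nonneg hpos.le]
      push_cast
      ring
  exact ⟨key, by rw [key]; exact mul_ne_zero (by norm_num) (Int.cast_ne_zero.mpr hn)⟩
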